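/- Let Φ be a Young function, φ ∈ G₁^dec, and let ψ:ℝⁿ→ℝⁿ be a measurable nonsingular map. Then the composition operator C_ψ is bounded on the weak Orlicz–Morrey space wM_Φ^φ(ℝⁿ) if and only if there exists a constant K>0 such that for every measurable set A⊂ℝⁿ, ‖χ_{ψ⁻¹(A)}‖_{M_Φ^φ} ≤ K‖χ_A‖_{M_Φ^φ}. -/

import Mathlib

open MeasureTheory Filter Set
open scoped ENNReal NNReal

noncomputable section

/-- A Young function: convex on `[0,∞)`, vanishing at `0`, nonnegative, tending to `∞`. -/
def IsYoung (Φ : ℝ → ℝ) : Prop :=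
  ConvexOn ℝ (Set.Ici 0) Φ ∧ Φ 0 = 0 ∧ (∀ t, 0 ≤ t → 0 ≤ Φ t) ∧
    Filter.Tendsto Φ Filter.atTop Filter.atTop

/-- Almost decreasing on `(0,∞)`: `g s ≤ C * g r` whenever `0 < r < s`. -/
def AlmostDecreasingOn (g : ℝ → ℝ) : Prop :=
  ∃ C > 0, ∀ r s : ℝ, 0 < r → r < s → g s ≤ C * g r

/-- Almost increasing on `(0,∞)`: `g r ≤ C * g s` whenever `0 < r < s`. -/
def AlmostIncreasingOn (g : ℝ → ℝ) : Prop :=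
  ∃ C > 0, ∀ r s : ℝ, 0 < r → r < s → g r ≤ C * g s

/-- The class `G₁^dec`: positive, almost decreasing and submultiplicative on `(0,∞)`. -/
def G1dec (φ : ℝ → ℝ) : Prop :=
  (∀ r : ℝ, 0 < r → 0 < φ r) ∧ AlmostDecreasingOn φ ∧
    ∃ C > 0, ∀ r s : ℝ, 0 < r → 0 < s → φ (r * s) ≤ C * φ r * φ s

/-- The class `G₂^dec`: `φ ∈ G₀ ∩ G₁^dec` and `φ(1/r) ≤ C/φ(r)`. -/
def G2dec (φ : ℝ → ℝ) : Prop :=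
  G1dec φ ∧ Filter.Tendsto φ (nhdsWithin 0 (Set.Ioi 0)) Filter.atTop ∧
    Filter.Tendsto φ Filter.atTop (nhds 0) ∧
    ∃ C > 0, ∀ r : ℝ, 0 < r → φ r⁻¹ ≤ C / φ r

/-- Generalized inverse of a Young function: `Φ⁻¹(u) = inf {t ≥ 0 : Φ(t) > u}`. -/
def yInv (Φ : ℝ → ℝ) (u : ℝ) : ℝ := sInf {t : ℝ | 0 ≤ t ∧ u < Φ t}

/-- The Luxemburg-type norm of `f` on the ball `B(a,r)`:
`inf {λ > 0 : (1/|B|) ∫_B Φ(|f|/λ) ≤ 1}` (as an extended nonnegative real). -/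
def ballLux {n : ℕ} (Φ : ℝ → ℝ) (a : EuclideanSpace ℝ (Fin n)) (r : ℝ)
    (f : EuclideanSpace ℝ (Fin n) → ℝ) : ℝ≥0∞ :=
  sInf {lam : ℝ≥0∞ | ∃ l : ℝ, 0 < l ∧ lam = ENNReal.ofReal l ∧
    (∫ x in Metric.ball a r, Φ (|f x| / l)) ≤ (volume (Metric.ball a r)).toReal}

/-- The Orlicz–Morrey norm `‖f‖_{M_Φ^φ} = sup_{a, r>0} (1/φ(r)) ‖f‖_{Φ,B(a,r)}`. -/
def omNorm {n : ℕ} (Φ φ : ℝ → ℝ) (f : EuclideanSpace ℝ (Fin n) → ℝ) : ℝ≥0∞ :=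
  ⨆ (a : EuclideanSpace ℝ (Fin n)) (r : ℝ) (_ : 0 < r),
    (ENNReal.ofReal (φ r))⁻¹ * ballLux Φ a r f

/-- The weak Luxemburg-type norm of `f` on the ball `B(a,r)`:
`inf {λ > 0 : sup_{t>0} Φ(t)·m(B, f/λ, t) ≤ |B|}`. -/
def ballLuxWeak {n : ℕ} (Φ : ℝ → ℝ) (a : EuclideanSpace ℝ (Fin n)) (r : ℝ)
    (f : EuclideanSpace ℝ (Fin n) → ℝ) : ℝ≥0∞ :=
  sInf {lam : ℝ≥0∞ | ∃ l : ℝ, 0 < l ∧ lam = ENNReal.ofReal l ∧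
    ∀ t : ℝ, 0 < t →
      ENNReal.ofReal (Φ t) * volume {x | x ∈ Metric.ball a r ∧ t < |f x| / l} ≤
        volume (Metric.ball a r)}

/-- The weak Orlicz–Morrey norm `‖f‖_{wM_Φ^φ}`. -/
def womNorm {n : ℕ} (Φ φ : ℝ → ℝ) (f : EuclideanSpace ℝ (Fin n) → ℝ) : ℝ≥0∞ :=
  ⨆ (a : EuclideanSpace ℝ (Fin n)) (r : ℝ) (_ : 0 < r),
    (ENNReal.ofReal (φ r))⁻¹ * ballLuxWeak Φ a r f

end

section Aux

variable {n : ℕ} {Φ : ℝ → ℝ}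

lemma young_mono (hΦ : IsYoung Φ) {a b : ℝ} (ha : 0 ≤ a) (hab : a ≤ b) : Φ a ≤ Φ b := by
  rcases eq_or_lt_of_le hab with rfl | h
  · exact le_refl _
  have hb : 0 < b := lt_of_le_of_lt ha h
  have h1 : Φ ((1 - a / b) • (0 : ℝ) + (a / b) • b) ≤ (1 - a / b) * Φ 0 + (a / b) * Φ b :=
    hΦ.1.2 (le_refl (0:ℝ)) hb.le
      (by rw [sub_nonneg]; exact div_le_one_of_le₀ hab hb.le) (by positivity) (by ring)
  have h2 : (1 - a / b) • (0 : ℝ) + (a / b) • b = a := by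
    simp only [smul_eq_mul, mul_zero, zero_add]
    field_simp
  rw [h2, hΦ.2.1, mul_zero, zero_add] at h1
  calc Φ a ≤ (a / b) * Φ b := h1
    _ ≤ 1 * Φ b := by
        apply mul_le_mul_of_nonneg_right _ (hΦ.2.2.1 b hb.le)
        exact div_le_one_of_le₀ hab hb.le
    _ = Φ b := one_mul _

lemma lux_integral (hΦ : IsYoung Φ) {E : Set (EuclideanSpace ℝ (Fin n))}
    (hE : MeasurableSet E) (a : EuclideanSpace ℝ (Fin n)) (r : ℝ) (l : ℝ) :
    (∫ x in Metric.ball a r, Φ (|Set.indicator E (fun _ => (1:ℝ)) x| / l)) =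
      (volume (Metric.ball a r ∩ E)).toReal * Φ (1 / l) := by
  have hfun : (fun x => Φ (|Set.indicator E (fun _ => (1:ℝ)) x| / l)) =
      Set.indicator E (fun _ => Φ (1 / l)) := by
    funext x
    by_cases hx : x ∈ E
    · simp [hx, one_div]
    · simp [hx, hΦ.2.1]
  rw [hfun, setIntegral_indicator hE, setIntegral_const, smul_eq_mul]
  rfl

-- the superlevel set of an indicator
lemma ind_superlevel (E : Set (EuclideanSpace ℝ (Fin n))) (a : EuclideanSpace ℝ (Fin n))
    (r : ℝ) {l t : ℝ} (hl : 0 < l) (ht : 0 < t) :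
    {x | x ∈ Metric.ball a r ∧ t < |Set.indicator E (fun _ => (1:ℝ)) x| / l} =
      if t < 1 / l then Metric.ball a r ∩ E else ∅ := by
  split_ifs with htl
  · ext x
    simp only [Set.mem_setOf_eq, Set.mem_inter_iff]
    constructor
    · rintro ⟨hx1, hx2⟩
      refine ⟨hx1, ?_⟩
      by_contra hxe
      simp only [Set.indicator_of_notMem hxe, abs_zero, zero_div] at hx2
      exact absurd hx2 (not_lt.2 ht.le)
    · rintro ⟨hx1, hx2⟩
      exact ⟨hx1, by simpa [Set.indicator_of_mem hx2, one_div] using htl⟩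
  · ext x
    simp only [Set.mem_setOf_eq, Set.mem_empty_iff_false, iff_false, not_and]
    intro _
    by_cases hxe : x ∈ E
    · simp only [Set.indicator_of_mem hxe, abs_one]
      rw [not_lt] at htl ⊢
      simpa [one_div] using htl
    · simp only [Set.indicator_of_notMem hxe, abs_zero, zero_div]
      exact not_lt.2 ht.le

lemma ballLuxWeak_ind_le (hΦ : IsYoung Φ) {E : Set (EuclideanSpace ℝ (Fin n))}
    (hE : MeasurableSet E) (a : EuclideanSpace ℝ (Fin n)) (r : ℝ) :
    ballLuxWeak Φ a r (Set.indicator E (fun _ => (1:ℝ))) ≤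
      ballLux Φ a r (Set.indicator E (fun _ => (1:ℝ))) := by
  apply sInf_le_sInf
  rintro lam ⟨l, hl, rfl, hcond⟩
  refine ⟨l, hl, rfl, ?_⟩
  intro t ht
  rw [ind_superlevel E a r hl ht]
  split_ifs with htl
  · rw [lux_integral hΦ hE a r l] at hcond
    have hfin : volume (Metric.ball a r ∩ E) ≠ ⊤ :=
      (lt_of_le_of_lt (measure_mono Set.inter_subset_left) measure_ball_lt_top).ne
    have hΦt : Φ t ≤ Φ (1 / l) := young_mono hΦ ht.le htl.le
    calc ENNReal.ofReal (Φ t) * volume (Metric.ball a r ∩ E)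
        ≤ ENNReal.ofReal (Φ (1 / l)) * volume (Metric.ball a r ∩ E) :=
          mul_le_mul' (ENNReal.ofReal_le_ofReal hΦt) le_rfl
      _ = ENNReal.ofReal ((volume (Metric.ball a r ∩ E)).toReal * Φ (1 / l)) := by
          rw [mul_comm, ENNReal.ofReal_mul ENNReal.toReal_nonneg, ENNReal.ofReal_toReal hfin]
      _ ≤ ENNReal.ofReal ((volume (Metric.ball a r)).toReal) :=
          ENNReal.ofReal_le_ofReal hcond
      _ = volume (Metric.ball a r) := ENNReal.ofReal_toReal measure_ball_lt_top.ne
  · simp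

lemma ballLux_ind_le (hΦ : IsYoung Φ) {E : Set (EuclideanSpace ℝ (Fin n))}
    (hE : MeasurableSet E) (a : EuclideanSpace ℝ (Fin n)) (r : ℝ) :
    ballLux Φ a r (Set.indicator E (fun _ => (1:ℝ))) ≤
      ballLuxWeak Φ a r (Set.indicator E (fun _ => (1:ℝ))) := by
  apply le_sInf
  rintro lam ⟨l, hl, rfl, hcond⟩
  refine ENNReal.le_of_forall_pos_le_add ?_
  intro ε hε _
  have hlε : 0 < l + (ε : ℝ) := by positivity
  have hmem : (∫ x in Metric.ball a r,
      Φ (|Set.indicator E (fun _ => (1:ℝ)) x| / (l + ε))) ≤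
      (volume (Metric.ball a r)).toReal := by
    rw [lux_integral hΦ hE a r _]
    have ht : (0:ℝ) < 1 / (l + ε) := by positivity
    have htl : 1 / (l + (ε:ℝ)) < 1 / l := by
      apply one_div_lt_one_div_of_lt hl
      simpa using hε
    have := hcond (1 / (l + ε)) ht
    rw [ind_superlevel E a r hl ht, if_pos htl] at this
    have hfin : volume (Metric.ball a r ∩ E) ≠ ⊤ :=
      (lt_of_le_of_lt (measure_mono Set.inter_subset_left) measure_ball_lt_top).ne
    have h2 := ENNReal.toReal_mono measure_ball_lt_top.ne this
    rw [ENNReal.toReal_mul, ENNReal.toReal_ofReal (hΦ.2.2.1 _ ht.le)] at h2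
    calc (volume (Metric.ball a r ∩ E)).toReal * Φ (1 / (l + ε))
        = Φ (1 / (l + ε)) * (volume (Metric.ball a r ∩ E)).toReal := mul_comm _ _
      _ ≤ (volume (Metric.ball a r)).toReal := h2
  calc ballLux Φ a r (Set.indicator E (fun _ => (1:ℝ)))
      ≤ ENNReal.ofReal (l + ε) := sInf_le ⟨l + ε, hlε, rfl, hmem⟩
    _ = ENNReal.ofReal l + ε := by
        rw [ENNReal.ofReal_add hl.le ε.coe_nonneg, ENNReal.ofReal_coe_nnreal]

end Aux



section Aux2
variable {n : ℕ} {Φ φ : ℝ → ℝ}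

lemma omNorm_ind_eq (hΦ : IsYoung Φ) (φ : ℝ → ℝ) {E : Set (EuclideanSpace ℝ (Fin n))}
    (hE : MeasurableSet E) :
    omNorm Φ φ (Set.indicator E (fun _ => (1:ℝ))) =
      womNorm Φ φ (Set.indicator E (fun _ => (1:ℝ))) := by
  refine iSup_congr fun a => iSup_congr fun r => iSup_congr fun hr => ?_
  rw [le_antisymm (ballLux_ind_le hΦ hE a r) (ballLuxWeak_ind_le hΦ hE a r)]

/-- scaling: `s ⬝ ‖χ_{Em_s}‖_{weak} ≤ ‖f‖_{weak}` on each ball, where `Em_s` is a measurable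
hull of the superlevel set `{|f| > s}`. -/
lemma weak_ind_level (hΦ : IsYoung Φ) (f : EuclideanSpace ℝ (Fin n) → ℝ) {s : ℝ} (hs : 0 < s)
    (a : EuclideanSpace ℝ (Fin n)) (r : ℝ) :
    ENNReal.ofReal s * ballLuxWeak Φ a r
        (Set.indicator (toMeasurable volume {y | s < |f y|}) (fun _ => (1:ℝ))) ≤
      ballLuxWeak Φ a r f := by
  apply le_sInf
  rintro lam ⟨l, hl, rfl, hcond⟩
  set E := {y | s < |f y|} with hEdef
  have hW : ballLuxWeak Φ a r (Set.indicator (toMeasurable volume E) (fun _ => (1:ℝ))) ≤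
      ENNReal.ofReal (l / s) := by
    apply sInf_le
    refine ⟨l / s, div_pos hl hs, rfl, ?_⟩
    intro u hu
    rw [ind_superlevel _ a r (div_pos hl hs) hu]
    split_ifs with hus
    · have hmeq : volume (Metric.ball a r ∩ toMeasurable volume E) = volume (E ∩ Metric.ball a r) := by
        rw [Set.inter_comm]
        exact MeasureTheory.Measure.measure_toMeasurable_inter_of_sFinite
          measurableSet_ball E
      rw [hmeq]
      have hsub : E ∩ Metric.ball a r ⊆ {x | x ∈ Metric.ball a r ∧ u < |f x| / l} := by
        rintro x ⟨hx1, hx2⟩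
        refine ⟨hx2, ?_⟩
        have h1 : u < s / l := by
          rwa [one_div_div] at hus
        have h3 : u * l < s := (lt_div_iff₀ hl).mp h1
        rw [lt_div_iff₀ hl]
        have hx1' : s < |f x| := hx1
        linarith
      calc ENNReal.ofReal (Φ u) * volume (E ∩ Metric.ball a r)
          ≤ ENNReal.ofReal (Φ u) * volume {x | x ∈ Metric.ball a r ∧ u < |f x| / l} :=
            mul_le_mul' le_rfl (measure_mono hsub)
        _ ≤ volume (Metric.ball a r) := hcond u hu
    · simp
  calc ENNReal.ofReal s * ballLuxWeak Φ a r (Set.indicator (toMeasurable volume E) (fun _ => (1:ℝ)))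
      ≤ ENNReal.ofReal s * ENNReal.ofReal (l / s) := mul_le_mul' le_rfl hW
    _ = ENNReal.ofReal (s * (l / s)) := (ENNReal.ofReal_mul hs.le).symm
    _ = ENNReal.ofReal l := by rw [mul_div_cancel₀ _ hs.ne.symm]

end Aux2

section Main
variable {n : ℕ}


/-- For a measurable nonsingular `ψ : ℝⁿ → ℝⁿ`, the composition operator
`C_ψ` is bounded on the weak Orlicz–Morrey space `wM_Φ^φ(ℝⁿ)` if and only if there is
`K > 0` with `‖χ_{ψ⁻¹(A)}‖_{M_Φ^φ} ≤ K ‖χ_A‖_{M_Φ^φ}` for all measurable `A`. -/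
theorem statement2 {n : ℕ} (Φ φ : ℝ → ℝ) (hΦ : IsYoung Φ) (hφ : G1dec φ)
    (ψ : EuclideanSpace ℝ (Fin n) → EuclideanSpace ℝ (Fin n)) (hψ : Measurable ψ)
    (hns : ∀ A : Set (EuclideanSpace ℝ (Fin n)), MeasurableSet A → volume A = 0 →
      volume (ψ ⁻¹' A) = 0) :
    (∃ K > 0, ∀ f : EuclideanSpace ℝ (Fin n) → ℝ,
        womNorm Φ φ (f ∘ ψ) ≤ ENNReal.ofReal K * womNorm Φ φ f) ↔
    (∃ K > 0, ∀ A : Set (EuclideanSpace ℝ (Fin n)), MeasurableSet A →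
        omNorm Φ φ (Set.indicator (ψ ⁻¹' A) (fun _ => (1 : ℝ))) ≤
          ENNReal.ofReal K * omNorm Φ φ (Set.indicator A (fun _ => (1 : ℝ)))) := by
  have hφpos := hφ.1
  constructor
  · rintro ⟨K, hK, hb⟩
    refine ⟨K, hK, fun A hA => ?_⟩
    have hcomp : Set.indicator A (fun _ => (1:ℝ)) ∘ ψ =
        Set.indicator (ψ ⁻¹' A) (fun _ => (1:ℝ)) := by
      funext x
      by_cases h : ψ x ∈ A <;> simp [h, Function.comp]
    calc omNorm Φ φ (Set.indicator (ψ ⁻¹' A) (fun _ => (1:ℝ)))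
        = womNorm Φ φ (Set.indicator (ψ ⁻¹' A) (fun _ => (1:ℝ))) :=
          omNorm_ind_eq hΦ φ (hA.preimage hψ)
      _ = womNorm Φ φ (Set.indicator A (fun _ => (1:ℝ)) ∘ ψ) := by rw [hcomp]
      _ ≤ ENNReal.ofReal K * womNorm Φ φ (Set.indicator A (fun _ => (1:ℝ))) := hb _
      _ = ENNReal.ofReal K * omNorm Φ φ (Set.indicator A (fun _ => (1:ℝ))) := by
          rw [omNorm_ind_eq hΦ φ hA]
  · rintro ⟨K, hK, hb⟩
    refine ⟨K, hK, fun f => ?_⟩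
    set M := womNorm Φ φ f with hM
    by_cases hMtop : M = ⊤
    · rw [hMtop, ENNReal.mul_top (ENNReal.ofReal_pos.2 hK).ne']
      exact le_top
    unfold womNorm
    apply iSup_le; intro a; apply iSup_le; intro r; apply iSup_le; intro hr
    have hφr : 0 < φ r := hφpos r hr
    have hφrne : ENNReal.ofReal (φ r) ≠ 0 := (ENNReal.ofReal_pos.2 hφr).ne'
    have hkey : ballLuxWeak Φ a r (f ∘ ψ) ≤ ENNReal.ofReal (K * φ r * M.toReal) := by
      refine ENNReal.le_of_forall_pos_le_add fun ε hε _ => ?_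
      have hKM : 0 ≤ K * φ r * M.toReal :=
        mul_nonneg (mul_nonneg hK.le hφr.le) ENNReal.toReal_nonneg
      set l : ℝ := K * φ r * M.toReal + ε with hldef
      have hl : 0 < l := lt_add_of_le_of_pos hKM (NNReal.coe_pos.2 hε)
      have hmain : ballLuxWeak Φ a r (f ∘ ψ) ≤ ENNReal.ofReal l := by
        apply sInf_le
        refine ⟨l, hl, rfl, ?_⟩
        intro t ht
        set Em := toMeasurable volume {y | l * t < |f y|} with hEm
        have hlt : (0:ℝ) < l * t := mul_pos hl ht
        have holtne : ENNReal.ofReal (l * t) ≠ 0 := (ENNReal.ofReal_pos.2 hlt).ne'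
        have h4 : womNorm Φ φ (Set.indicator Em (fun _ => (1:ℝ))) ≤
            M / ENNReal.ofReal (l * t) := by
          unfold womNorm
          apply iSup_le; intro a'; apply iSup_le; intro r'; apply iSup_le; intro hr'
          have hkey2 := weak_ind_level hΦ f hlt a' r'
          have hW : ballLuxWeak Φ a' r' (Set.indicator Em fun _ => (1:ℝ)) ≤
              ballLuxWeak Φ a' r' f / ENNReal.ofReal (l * t) :=
            (ENNReal.le_div_iff_mul_le (Or.inl holtne) (Or.inl ENNReal.ofReal_ne_top)).2
              (by rw [mul_comm]; exact hkey2)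
          calc (ENNReal.ofReal (φ r'))⁻¹ * ballLuxWeak Φ a' r' (Set.indicator Em fun _ => (1:ℝ))
              ≤ (ENNReal.ofReal (φ r'))⁻¹ * (ballLuxWeak Φ a' r' f / ENNReal.ofReal (l * t)) :=
                mul_le_mul' le_rfl hW
            _ = ((ENNReal.ofReal (φ r'))⁻¹ * ballLuxWeak Φ a' r' f) / ENNReal.ofReal (l * t) :=
                (mul_div_assoc _ _ _).symm
            _ ≤ M / ENNReal.ofReal (l * t) := by
                apply ENNReal.div_le_div_right
                rw [hM]; unfold womNorm
                exact le_iSup_of_le a' (le_iSup_of_le r' (le_iSup_of_le hr' le_rfl))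
        have h1 : (ENNReal.ofReal (φ r))⁻¹ *
            ballLux Φ a r (Set.indicator (ψ ⁻¹' Em) fun _ => (1:ℝ)) ≤
            omNorm Φ φ (Set.indicator (ψ ⁻¹' Em) fun _ => (1:ℝ)) := by
          unfold omNorm
          exact le_iSup_of_le a (le_iSup_of_le r (le_iSup_of_le hr le_rfl))
        have h3 : omNorm Φ φ (Set.indicator (ψ ⁻¹' Em) fun _ => (1:ℝ)) ≤
            ENNReal.ofReal K * (M / ENNReal.ofReal (l * t)) :=
          (hb Em (measurableSet_toMeasurable _ _)).trans
            (mul_le_mul' le_rfl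
              ((omNorm_ind_eq hΦ φ (measurableSet_toMeasurable _ _)).le.trans h4))
        have h2 : ballLux Φ a r (Set.indicator (ψ ⁻¹' Em) fun _ => (1:ℝ)) ≤
            ENNReal.ofReal (φ r) * (ENNReal.ofReal K * (M / ENNReal.ofReal (l * t))) := by
          calc ballLux Φ a r (Set.indicator (ψ ⁻¹' Em) fun _ => (1:ℝ))
              = ENNReal.ofReal (φ r) * ((ENNReal.ofReal (φ r))⁻¹ *
                ballLux Φ a r (Set.indicator (ψ ⁻¹' Em) fun _ => (1:ℝ))) := by
                rw [← mul_assoc, ENNReal.mul_inv_cancel hφrne ENNReal.ofReal_ne_top, one_mul]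
            _ ≤ ENNReal.ofReal (φ r) *
                omNorm Φ φ (Set.indicator (ψ ⁻¹' Em) fun _ => (1:ℝ)) := mul_le_mul' le_rfl h1
            _ ≤ ENNReal.ofReal (φ r) * (ENNReal.ofReal K * (M / ENNReal.ofReal (l * t))) :=
                mul_le_mul' le_rfl h3
        have h5 : ENNReal.ofReal (φ r) * (ENNReal.ofReal K * (M / ENNReal.ofReal (l * t))) <
            ENNReal.ofReal (1 / t) := by
          have hMR : M = ENNReal.ofReal M.toReal := (ENNReal.ofReal_toReal hMtop).symm
          have heq : ENNReal.ofReal (φ r) * (ENNReal.ofReal K * (M / ENNReal.ofReal (l * t)))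
              = ENNReal.ofReal (φ r * (K * M.toReal)) / ENNReal.ofReal (l * t) := by
            rw [hMR, ← mul_div_assoc, ← mul_div_assoc, ← ENNReal.ofReal_mul hK.le,
              ← ENNReal.ofReal_mul hφr.le, ENNReal.toReal_ofReal ENNReal.toReal_nonneg]
          rw [heq, ENNReal.div_lt_iff (Or.inl holtne) (Or.inl ENNReal.ofReal_ne_top),
            ← ENNReal.ofReal_mul (by positivity)]
          have harith : 1 / t * (l * t) = l := by field_simp
          rw [harith]
          refine (ENNReal.ofReal_lt_ofReal_iff hl).2 ?_
          have hεpos : (0:ℝ) < ε := NNReal.coe_pos.2 hε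
          rw [hldef]
          nlinarith [hKM]
        have h6 : ballLux Φ a r (Set.indicator (ψ ⁻¹' Em) fun _ => (1:ℝ)) <
            ENNReal.ofReal (1 / t) := lt_of_le_of_lt h2 h5
        rw [ballLux] at h6
        obtain ⟨lam, ⟨l₀, hl₀, rfl, hstrong⟩, hlam⟩ := sInf_lt_iff.mp h6
        have hl₀t : l₀ < 1 / t := (ENNReal.ofReal_lt_ofReal_iff (by positivity)).mp hlam
        have ht₀ : t ≤ 1 / l₀ := by
          rw [le_div_iff₀ hl₀]
          have := (lt_div_iff₀ ht).mp hl₀t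
          nlinarith
        have hsub : {x | x ∈ Metric.ball a r ∧ t < |(f ∘ ψ) x| / l} ⊆
            Metric.ball a r ∩ ψ ⁻¹' Em := by
          rintro x ⟨hx1, hx2⟩
          refine ⟨hx1, subset_toMeasurable _ _ ?_⟩
          show l * t < |f (ψ x)|
          have := (lt_div_iff₀ hl).mp hx2
          calc l * t = t * l := mul_comm _ _
            _ < |(f ∘ ψ) x| := this
            _ = |f (ψ x)| := rfl
        rw [lux_integral hΦ ((measurableSet_toMeasurable _ _).preimage hψ) a r l₀] at hstrong
        have hfin : volume (Metric.ball a r ∩ ψ ⁻¹' Em) ≠ ⊤ :=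
          (lt_of_le_of_lt (measure_mono Set.inter_subset_left) measure_ball_lt_top).ne
        calc ENNReal.ofReal (Φ t) * volume {x | x ∈ Metric.ball a r ∧ t < |(f ∘ ψ) x| / l}
            ≤ ENNReal.ofReal (Φ t) * volume (Metric.ball a r ∩ ψ ⁻¹' Em) :=
              mul_le_mul' le_rfl (measure_mono hsub)
          _ ≤ ENNReal.ofReal (Φ (1 / l₀)) * volume (Metric.ball a r ∩ ψ ⁻¹' Em) :=
              mul_le_mul' (ENNReal.ofReal_le_ofReal (young_mono hΦ ht.le ht₀)) le_rfl
          _ = ENNReal.ofReal ((volume (Metric.ball a r ∩ ψ ⁻¹' Em)).toReal * Φ (1 / l₀)) := by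
              rw [mul_comm (ENNReal.ofReal _), ENNReal.ofReal_mul ENNReal.toReal_nonneg,
                ENNReal.ofReal_toReal hfin]
          _ ≤ ENNReal.ofReal ((volume (Metric.ball a r)).toReal) :=
              ENNReal.ofReal_le_ofReal hstrong
          _ = volume (Metric.ball a r) := ENNReal.ofReal_toReal measure_ball_lt_top.ne
      calc ballLuxWeak Φ a r (f ∘ ψ) ≤ ENNReal.ofReal l := hmain
        _ = ENNReal.ofReal (K * φ r * M.toReal) + ε := by
            rw [hldef, ENNReal.ofReal_add hKM ε.coe_nonneg, ENNReal.ofReal_coe_nnreal]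
    calc (ENNReal.ofReal (φ r))⁻¹ * ballLuxWeak Φ a r (f ∘ ψ)
        ≤ (ENNReal.ofReal (φ r))⁻¹ * ENNReal.ofReal (K * φ r * M.toReal) :=
          mul_le_mul' le_rfl hkey
      _ = ENNReal.ofReal K * M := by
          rw [show K * φ r * M.toReal = φ r * (K * M.toReal) by ring,
            ENNReal.ofReal_mul hφr.le, ← mul_assoc,
            ENNReal.inv_mul_cancel hφrne ENNReal.ofReal_ne_top, one_mul,
            ENNReal.ofReal_mul hK.le, ENNReal.ofReal_toReal hMtop]
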